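/- Let p ≥ 1 and let P be a polynomial in p+1 variables u_1, …, u_{p+1} over a field of characteristic zero, whose degree in each variable u_i is at most p−1. If P vanishes identically on every hyperplane u_i = u_j + 1 with 1 ≤ i < j ≤ p+1, then P is the zero polynomial. -/
import Mathlib


open MvPolynomial

/-- If a polynomial in `p+1` variables over a field of characteristic zero has degree at most
`p-1` in each variable and vanishes identically on each hyperplane `u_i = u_j + 1` (`i < j`),
then it is the zero polynomial. -/
theorem stmt_0 {K : Type*} [Field K] [CharZero K] (p : ℕ) (hp : 1 ≤ p)
    (P : MvPolynomial (Fin (p + 1)) K)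
    (hdeg : ∀ i, P.degreeOf i ≤ p - 1)
    (hvan : ∀ i j : Fin (p + 1), i < j →
      (aeval (fun l => if l = i then X j + 1 else X l) P : MvPolynomial (Fin (p + 1)) K) = 0) :
    P = 0 := by
  classical
  set Q := MvPolynomial.finSuccEquiv K p P with hQ
  have hdegQ : Q.natDegree < p := by
    have h2 := hdeg 0
    rw [hQ, MvPolynomial.natDegree_finSuccEquiv]
    omega
  have heval : ∀ j : Fin p, Q.eval (X j + 1 : MvPolynomial (Fin p) K) = 0 := by
    intro j
    have key : ((rename (Fin.succ : Fin p → Fin (p + 1))).toRingHom.comp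
        ((Polynomial.evalRingHom (X j + 1 : MvPolynomial (Fin p) K)).comp
          (MvPolynomial.finSuccEquiv K p : MvPolynomial (Fin (p+1)) K →+* Polynomial (MvPolynomial (Fin p) K))))
        = (aeval (fun l : Fin (p+1) => if l = 0 then X j.succ + 1 else X l)
            : MvPolynomial (Fin (p+1)) K →ₐ[K] MvPolynomial (Fin (p+1)) K).toRingHom := by
      apply MvPolynomial.ringHom_ext
      · intro c
        simp [MvPolynomial.finSuccEquiv_apply, MvPolynomial.eval₂Hom_C]
      · intro i
        refine Fin.cases ?_ ?_ i
        · simp [MvPolynomial.finSuccEquiv_X_zero]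
        · intro k
          simp [MvPolynomial.finSuccEquiv_X_succ, Fin.succ_ne_zero]
    have h0 : (0 : Fin (p+1)) < j.succ := by
      exact Fin.succ_pos j
    have hv : (bind₁ fun l : Fin (p+1) => if l = 0 then X j.succ + 1 else X l) P = 0 :=
      hvan 0 j.succ h0
    have hren : rename (Fin.succ : Fin p → Fin (p + 1)) (Q.eval (X j + 1)) = 0 := by
      have := congrArg (fun φ : MvPolynomial (Fin (p+1)) K →+* MvPolynomial (Fin (p+1)) K => φ P) key
      simpa [hQ, hv] using this
    have hinj := MvPolynomial.rename_injective (R := K) (Fin.succ : Fin p → Fin (p + 1))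
      (Fin.succ_injective p)
    have : rename (Fin.succ : Fin p → Fin (p + 1)) (Q.eval (X j + 1)) =
        rename (Fin.succ : Fin p → Fin (p + 1)) 0 := by simpa using hren
    exact hinj this
  have hfinj : Function.Injective (fun j : Fin p => (X j + 1 : MvPolynomial (Fin p) K)) := by
    intro a b hab
    have : (X a : MvPolynomial (Fin p) K) = X b := by
      have := hab
      simpa using add_right_cancel this
    exact MvPolynomial.X_injective this
  have hQ0 : Q = 0 :=
    Polynomial.eq_zero_of_natDegree_lt_card_of_eval_eq_zero Q hfinj heval (by simpa using hdegQ)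
  have := (MvPolynomial.finSuccEquiv K p).injective
  apply this
  simpa [hQ] using hQ0
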